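/- Let G be a relevant position of the game influence, let x, x' ∈ L(G) and y ∈ R(G). Then: (1) if x' ∈ Rmv(G,x), then Rmv(G,x') ⊆ Rmv(G,x) and (G_{x'})_x = G_x; (2) if x' ∉ Rmv(G,x) and x ∉ Rmv(G,x'), then (G_{x'})_x = (G_x)_{x'}; (3) if x ∉ Rmv(G,y), then Rmv(G_x, y) = Rmv(G,y) and (G_x)_y = (G_y)_x. -/

import Mathlib

namespace Influence

open Finset

/-- A position of the game `influence`: a finite directed graph with vertex set `V`,
arc set `A`, and the set `left` of Left (black) vertices; Right's vertices are `V \ left`. -/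
structure Pos (α : Type) [DecidableEq α] where
  V : Finset α
  A : Finset (α × α)
  left : Finset α

variable {α : Type} [DecidableEq α]

namespace Pos

/-- The set of Right vertices. -/
def R (G : Pos α) : Finset α := G.V \ G.left

/-- Well-formedness: arcs join vertices, and Left vertices are vertices. -/
def WF (G : Pos α) : Prop :=
  (∀ p ∈ G.A, p.1 ∈ G.V ∧ p.2 ∈ G.V) ∧ G.left ⊆ G.V

open Classical in
/-- `Succ G x`: vertices reachable from `x` by a directed path (including `x` itself). -/
noncomputable def Succ (G : Pos α) (x : α) : Finset α :=
  G.V.filter (fun z => Relation.ReflTransGen (fun a b => (a, b) ∈ G.A) x z)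

open Classical in
/-- `Pred G y`: vertices from which `y` is reachable by a directed path (including `y`). -/
noncomputable def Pred (G : Pos α) (y : α) : Finset α :=
  G.V.filter (fun z => Relation.ReflTransGen (fun a b => (a, b) ∈ G.A) z y)

open Classical in
noncomputable def ForcL (G : Pos α) : Finset α :=
  G.left.filter (fun x => G.Succ x ⊆ G.left)

open Classical in
noncomputable def ForcR (G : Pos α) : Finset α :=
  G.R.filter (fun y => G.Pred y ⊆ G.R)

noncomputable def Forc (G : Pos α) : Finset α := G.ForcL ∪ G.ForcR

/-- A relevant position: no forced vertices. -/
def Relevant (G : Pos α) : Prop := G.Forc = ∅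

/-- The induced subgraph `G ∖ S` on `V(G) \ S`. -/
def erase (G : Pos α) (S : Finset α) : Pos α :=
  ⟨G.V \ S, G.A.filter (fun p => p.1 ∈ G.V \ S ∧ p.2 ∈ G.V \ S), G.left \ S⟩

open Classical in
/-- The set of vertices removed when playing `x`:  for `x ∈ L`,
`Rmv(G,x) = Succ(G,x) ∪ Forc(G ∖ Succ(G,x))`; for `y ∈ R`,
`Rmv(G,y) = Pred(G,y) ∪ Forc(G ∖ Pred(G,y))`. -/
noncomputable def Rmv (G : Pos α) (x : α) : Finset α :=
  if x ∈ G.left then G.Succ x ∪ (G.erase (G.Succ x)).Forc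
  else G.Pred x ∪ (G.erase (G.Pred x)).Forc

/-- The resulting relevant position `G_x` after the move `x`. -/
noncomputable def move (G : Pos α) (x : α) : Pos α := G.erase (G.Rmv x)

mutual
/-- Auxiliary (fuel-indexed) score of Left playing first. -/
noncomputable def sL1Aux : ℕ → Pos α → ℕ
  | 0, _ => 0
  | k + 1, G =>
      if G.left.Nonempty then
        G.left.sup (fun x => (G.Rmv x).card + sL2Aux k (G.move x))
      else 0

/-- Auxiliary (fuel-indexed) score of Left playing second. -/
noncomputable def sL2Aux : ℕ → Pos α → ℕ
  | 0, _ => 0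
  | k + 1, G =>
      if h : G.R.Nonempty then G.R.inf' h (fun y => sL1Aux k (G.move y))
      else 0
end

mutual
/-- Auxiliary (fuel-indexed) score of Right playing first. -/
noncomputable def sR1Aux : ℕ → Pos α → ℕ
  | 0, _ => 0
  | k + 1, G =>
      if G.R.Nonempty then
        G.R.sup (fun y => (G.Rmv y).card + sR2Aux k (G.move y))
      else 0

/-- Auxiliary (fuel-indexed) score of Right playing second. -/
noncomputable def sR2Aux : ℕ → Pos α → ℕ
  | 0, _ => 0
  | k + 1, G =>
      if h : G.left.Nonempty then G.left.inf' h (fun x => sR1Aux k (G.move x))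
      else 0
end

/-- `s^L_1(G)`: the score of Left when Left plays first (optimal play). -/
noncomputable def sL1 (G : Pos α) : ℕ := sL1Aux G.V.card G

/-- `s^L_2(G)`: the score of Left when Right plays first (optimal play). -/
noncomputable def sL2 (G : Pos α) : ℕ := sL2Aux G.V.card G

/-- `s^R_1(G)`: the score of Right when Right plays first (optimal play). -/
noncomputable def sR1 (G : Pos α) : ℕ := sR1Aux G.V.card G

/-- `s^R_2(G)`: the score of Right when Left plays first (optimal play). -/
noncomputable def sR2 (G : Pos α) : ℕ := sR2Aux G.V.card G

/-- The Left score `Ls(G) = s^L_1(G) - s^R_2(G)`. -/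
noncomputable def Ls (G : Pos α) : ℤ := (G.sL1 : ℤ) - (G.sR2 : ℤ)

/-- The Right score `Rs(G) = s^L_2(G) - s^R_1(G)`. -/
noncomputable def Rs (G : Pos α) : ℤ := (G.sL2 : ℤ) - (G.sR1 : ℤ)

/-- Disjoint union (game sum) of two positions. -/
def union (G G' : Pos α) : Pos α := ⟨G.V ∪ G'.V, G.A ∪ G'.A, G.left ∪ G'.left⟩

/-- The empty position. -/
protected def empty : Pos α := ⟨∅, ∅, ∅⟩

end Pos

/-- The sum of a finite list of positions. -/
def sumList (l : List (Pos α)) : Pos α := l.foldr Pos.union Pos.empty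

open Classical in
/-- `G` is a segment: its vertex set is a set of at least two consecutive integers,
Left's vertices are the even ones, Right's the odd ones, and there is an arc from each
even vertex to each of its (odd) neighbours `±1` lying in the vertex set. -/
def IsSegment (G : Pos ℤ) : Prop :=
  2 ≤ G.V.card ∧
  (∀ i j k : ℤ, i ∈ G.V → j ∈ G.V → i ≤ k → k ≤ j → k ∈ G.V) ∧
  G.left = G.V.filter (fun n => Even n) ∧
  G.A = (G.V ×ˢ G.V).filter (fun p => Even p.1 ∧ (p.2 = p.1 + 1 ∨ p.2 = p.1 - 1))

/-- `G` is the finite disjoint union (game sum) of the list `l` of segments. -/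
def IsSegUnion (G : Pos ℤ) (l : List (Pos ℤ)) : Prop :=
  (∀ H ∈ l, IsSegment H) ∧
  l.Pairwise (fun H H' => Disjoint H.V H'.V) ∧
  G = sumList l


open Classical in
/-- `G` is an alternated cycle: obtained from a segment `S` with an even number of
vertices by adding the arc `(x, y)` where `x` is the endpoint of `S` in `L` (even) and
`y` the endpoint in `R` (odd). -/
def IsAltCycle (G : Pos ℤ) : Prop :=
  ∃ (S : Pos ℤ) (x y : ℤ), IsSegment S ∧ Even S.V.card ∧
    x ∈ S.V ∧ y ∈ S.V ∧ Even x ∧ ¬ Even y ∧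
    (∀ z ∈ S.V, min x y ≤ z ∧ z ≤ max x y) ∧
    G.V = S.V ∧ G.left = S.left ∧ G.A = insert (x, y) S.A

open Classical in
/-- `T` is (a copy of) the oriented tree `T_n^c`: a rooted tree of depth `n+1`, all arcs
oriented from parent to child, in which every vertex at level `k ≤ n-1` has exactly `3`
children, every vertex at level `n` has exactly `c` children, the leaves (level `n+1`)
are the Right vertices and all other vertices are Left vertices. -/
def IsTnc (n c : ℕ) (T : Pos α) : Prop :=
  T.WF ∧ ∃ lvl : α → ℕ,
    (∀ v ∈ T.V, lvl v ≤ n + 1) ∧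
    T.left = T.V.filter (fun v => lvl v ≤ n) ∧
    (∃! r, r ∈ T.V ∧ lvl r = 0) ∧
    (∀ p ∈ T.A, lvl p.2 = lvl p.1 + 1) ∧
    (∀ v ∈ T.V, 0 < lvl v → ∃! u, (u, v) ∈ T.A) ∧
    (∀ v ∈ T.V, lvl v < n → (T.V.filter (fun w => (v, w) ∈ T.A)).card = 3) ∧
    (∀ v ∈ T.V, lvl v = n → (T.V.filter (fun w => (v, w) ∈ T.A)).card = c)

/-- `J` is (a copy of) `J_n^c`, the disjoint union of two disjoint copies of `T_n^c`. -/
def IsJnc (n c : ℕ) (J : Pos α) : Prop :=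
  ∃ T1 T2 : Pos α, IsTnc n c T1 ∧ IsTnc n c T2 ∧ Disjoint T1.V T2.V ∧ J = T1.union T2

end Influence

open Influence Influence.Pos Finset

namespace InfluenceAux

variable {α : Type} [DecidableEq α]

/-- Reachability by a directed path. -/
def rch (G : Pos α) : α → α → Prop :=
  Relation.ReflTransGen (fun a b => (a, b) ∈ G.A)

lemma mem_Succ {G : Pos α} {x z : α} : z ∈ G.Succ x ↔ z ∈ G.V ∧ rch G x z := by
  simp [Pos.Succ, rch, Finset.mem_filter]

lemma mem_Pred {G : Pos α} {y z : α} : z ∈ G.Pred y ↔ z ∈ G.V ∧ rch G z y := by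
  simp [Pos.Pred, rch, Finset.mem_filter]

lemma mem_R {G : Pos α} {z : α} : z ∈ G.R ↔ z ∈ G.V ∧ z ∉ G.left := by
  simp [Pos.R, Finset.mem_sdiff]

lemma erase_V (G : Pos α) (S : Finset α) : (G.erase S).V = G.V \ S := rfl
lemma erase_left (G : Pos α) (S : Finset α) : (G.erase S).left = G.left \ S := rfl

lemma erase_R (G : Pos α) (S : Finset α) : (G.erase S).R = G.R \ S := by
  ext z; simp [Pos.R, Pos.erase, Finset.mem_sdiff]; tauto

lemma mem_erase_A {G : Pos α} {S : Finset α} {a b : α} :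
    (a, b) ∈ (G.erase S).A ↔ (a, b) ∈ G.A ∧ (a ∈ G.V ∧ a ∉ S) ∧ (b ∈ G.V ∧ b ∉ S) := by
  simp [Pos.erase, Finset.mem_filter, Finset.mem_sdiff]

lemma WF_erase {G : Pos α} (hwf : G.WF) (S : Finset α) : (G.erase S).WF := by
  constructor
  · rintro ⟨a, b⟩ hab
    rw [mem_erase_A] at hab
    exact ⟨Finset.mem_sdiff.2 hab.2.1, Finset.mem_sdiff.2 hab.2.2⟩
  · exact Finset.sdiff_subset_sdiff hwf.2 (le_refl S)

lemma erase_erase (G : Pos α) (S T : Finset α) :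
    (G.erase S).erase T = G.erase (S ∪ T) := by
  simp only [Pos.erase, Pos.mk.injEq]
  refine ⟨?_, ?_, ?_⟩
  · ext z; simp [Finset.mem_sdiff]; tauto
  · ext p; simp [Finset.mem_sdiff]; tauto
  · ext z; simp [Finset.mem_sdiff]; tauto

lemma erase_empty {G : Pos α} (hwf : G.WF) : G.erase ∅ = G := by
  have hA : G.A.filter (fun p => p.1 ∈ G.V \ (∅ : Finset α) ∧ p.2 ∈ G.V \ (∅ : Finset α))
      = G.A := by
    apply Finset.filter_true_of_mem
    intro p hp
    rw [Finset.sdiff_empty]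
    exact hwf.1 p hp
  obtain ⟨V, A, l⟩ := G
  simp only [Pos.erase, Pos.mk.injEq]
  exact ⟨Finset.sdiff_empty, hA, Finset.sdiff_empty⟩

/-- Forward-closed sets of vertices. -/
def Fwd (G : Pos α) (W : Finset α) : Prop := ∀ ⦃a b : α⦄, (a, b) ∈ G.A → a ∈ W → b ∈ W

/-- Backward-closed sets of vertices. -/
def Bwd (G : Pos α) (W : Finset α) : Prop := ∀ ⦃a b : α⦄, (a, b) ∈ G.A → b ∈ W → a ∈ W

lemma Fwd.rch_mem {G : Pos α} {W : Finset α} (hW : Fwd G W) {a b : α}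
    (ha : a ∈ W) (h : rch G a b) : b ∈ W := by
  induction h with
  | refl => exact ha
  | tail _ harc ih => exact hW harc ih

lemma Bwd.rch_mem {G : Pos α} {W : Finset α} (hW : Bwd G W) {a b : α}
    (h : rch G a b) (hb : b ∈ W) : a ∈ W := by
  revert hb
  induction h with
  | refl => exact id
  | tail _ harc ih => exact fun hb => ih (hW harc hb)

lemma fwd_Succ {G : Pos α} (hwf : G.WF) (x : α) : Fwd G (G.Succ x) := by
  intro a b hab ha
  exact mem_Succ.2 ⟨(hwf.1 _ hab).2, (mem_Succ.1 ha).2.tail hab⟩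

lemma bwd_Pred {G : Pos α} (hwf : G.WF) (y : α) : Bwd G (G.Pred y) := by
  intro a b hab hb
  exact mem_Pred.2 ⟨(hwf.1 _ hab).1, Relation.ReflTransGen.head hab (mem_Pred.1 hb).2⟩

lemma rch_of_erase {G : Pos α} {S : Finset α} {a b : α} (h : rch (G.erase S) a b) :
    rch G a b := by
  induction h with
  | refl => exact .refl
  | tail _ huv ih => exact ih.tail (mem_erase_A.1 huv).1

lemma rch_erase_fwd {G : Pos α} {W : Finset α} {a b : α} (hwf : G.WF) (hW : Fwd G W)
    (h : rch G a b) (hb : b ∉ W) : rch (G.erase W) a b := by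
  revert hb
  induction h with
  | refl => intro _; exact .refl
  | tail _ harc ih =>
    intro hb
    have hc : _ ∉ W := fun hcW => hb (hW harc hcW)
    exact (ih hc).tail (mem_erase_A.2 ⟨harc, ⟨(hwf.1 _ harc).1, hc⟩, ⟨(hwf.1 _ harc).2, hb⟩⟩)

lemma rch_erase_bwd {G : Pos α} {W : Finset α} {a b : α} (hwf : G.WF) (hW : Bwd G W)
    (h : rch G a b) (ha : a ∉ W) : rch (G.erase W) a b := by
  induction h with
  | refl => exact .refl
  | tail h' harc ih =>
    have hb : _ ∉ W := fun h => ha (hW.rch_mem h' (hW harc h))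
    have hc : _ ∉ W := fun h => ha (hW.rch_mem h' h)
    exact ih.tail (mem_erase_A.2 ⟨harc, ⟨(hwf.1 _ harc).1, hc⟩, ⟨(hwf.1 _ harc).2, hb⟩⟩)

lemma Succ_erase_fwd {G : Pos α} {W : Finset α} (hwf : G.WF) (hW : Fwd G W) (x : α) :
    (G.erase W).Succ x = G.Succ x \ W := by
  ext z
  simp only [mem_Succ, Finset.mem_sdiff, erase_V]
  constructor
  · rintro ⟨⟨hzV, hzW⟩, hr⟩; exact ⟨⟨hzV, rch_of_erase hr⟩, hzW⟩
  · rintro ⟨⟨hzV, hr⟩, hzW⟩; exact ⟨⟨hzV, hzW⟩, rch_erase_fwd hwf hW hr hzW⟩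

lemma Pred_erase_fwd {G : Pos α} {W : Finset α} (hwf : G.WF) (hW : Fwd G W) {y : α}
    (hy : y ∉ W) : (G.erase W).Pred y = G.Pred y \ W := by
  ext z
  simp only [mem_Pred, Finset.mem_sdiff, erase_V]
  constructor
  · rintro ⟨⟨hzV, hzW⟩, hr⟩; exact ⟨⟨hzV, rch_of_erase hr⟩, hzW⟩
  · rintro ⟨⟨hzV, hr⟩, hzW⟩; exact ⟨⟨hzV, hzW⟩, rch_erase_fwd hwf hW hr hy⟩

lemma Pred_erase_bwd {G : Pos α} {W : Finset α} (hwf : G.WF) (hW : Bwd G W) (y : α) :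
    (G.erase W).Pred y = G.Pred y \ W := by
  ext z
  simp only [mem_Pred, Finset.mem_sdiff, erase_V]
  constructor
  · rintro ⟨⟨hzV, hzW⟩, hr⟩; exact ⟨⟨hzV, rch_of_erase hr⟩, hzW⟩
  · rintro ⟨⟨hzV, hr⟩, hzW⟩; exact ⟨⟨hzV, hzW⟩, rch_erase_bwd hwf hW hr hzW⟩

lemma Succ_erase_bwd {G : Pos α} {W : Finset α} (hwf : G.WF) (hW : Bwd G W) {x : α}
    (hx : x ∉ W) : (G.erase W).Succ x = G.Succ x \ W := by
  ext z
  simp only [mem_Succ, Finset.mem_sdiff, erase_V]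
  constructor
  · rintro ⟨⟨hzV, hzW⟩, hr⟩; exact ⟨⟨hzV, rch_of_erase hr⟩, hzW⟩
  · rintro ⟨⟨hzV, hr⟩, hzW⟩; exact ⟨⟨hzV, hzW⟩, rch_erase_bwd hwf hW hr hx⟩

lemma mem_Forc {G : Pos α} {a : α} :
    a ∈ G.Forc ↔ (a ∈ G.left ∧ G.Succ a ⊆ G.left) ∨ (a ∈ G.R ∧ G.Pred a ⊆ G.R) := by
  simp [Pos.Forc, Pos.ForcL, Pos.ForcR, Finset.mem_filter, Finset.mem_union]

lemma relevant_not_forcL {G : Pos α} (hrel : G.Relevant) {a : α} (ha : a ∈ G.left) :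
    ¬ G.Succ a ⊆ G.left := fun h => by
  have : a ∈ G.Forc := mem_Forc.2 (Or.inl ⟨ha, h⟩)
  rw [hrel] at this; exact absurd this (Finset.notMem_empty a)

lemma relevant_not_forcR {G : Pos α} (hrel : G.Relevant) {b : α} (hb : b ∈ G.R) :
    ¬ G.Pred b ⊆ G.R := fun h => by
  have : b ∈ G.Forc := mem_Forc.2 (Or.inr ⟨hb, h⟩)
  rw [hrel] at this; exact absurd this (Finset.notMem_empty b)

lemma Forc_erase_fwd {G : Pos α} {W : Finset α} (hwf : G.WF) (hrel : G.Relevant)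
    (hW : Fwd G W) :
    (G.erase W).Forc = (G.left.filter (fun a => G.Succ a ⊆ G.left ∪ W)) \ W := by
  ext a
  rw [mem_Forc, Finset.mem_sdiff, Finset.mem_filter]
  constructor
  · rintro (⟨hal, hsub⟩ | ⟨har, hsub⟩)
    · rw [erase_left, Finset.mem_sdiff] at hal
      rw [Succ_erase_fwd hwf hW, erase_left] at hsub
      refine ⟨⟨hal.1, ?_⟩, hal.2⟩
      intro z hz
      rw [Finset.mem_union]
      by_cases hzW : z ∈ W
      · exact Or.inr hzW
      · exact Or.inl (Finset.mem_sdiff.1 (hsub (Finset.mem_sdiff.2 ⟨hz, hzW⟩))).1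
    · exfalso
      rw [erase_R, Finset.mem_sdiff] at har
      rw [Pred_erase_fwd hwf hW har.2, erase_R] at hsub
      refine relevant_not_forcR hrel har.1 ?_
      intro z hz
      have hzW : z ∉ W := fun h => har.2 (hW.rch_mem h (mem_Pred.1 hz).2)
      exact (Finset.mem_sdiff.1 (hsub (Finset.mem_sdiff.2 ⟨hz, hzW⟩))).1
  · rintro ⟨⟨hal, hsub⟩, haW⟩
    left
    rw [erase_left, Succ_erase_fwd hwf hW]
    refine ⟨Finset.mem_sdiff.2 ⟨hal, haW⟩, ?_⟩
    intro z hz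
    rw [Finset.mem_sdiff] at hz ⊢
    rcases Finset.mem_union.1 (hsub hz.1) with h | h
    · exact ⟨h, hz.2⟩
    · exact absurd h hz.2

lemma Forc_erase_bwd {G : Pos α} {W : Finset α} (hwf : G.WF) (hrel : G.Relevant)
    (hW : Bwd G W) :
    (G.erase W).Forc = (G.R.filter (fun b => G.Pred b ⊆ G.R ∪ W)) \ W := by
  ext a
  rw [mem_Forc, Finset.mem_sdiff, Finset.mem_filter]
  constructor
  · rintro (⟨hal, hsub⟩ | ⟨har, hsub⟩)
    · exfalso
      rw [erase_left, Finset.mem_sdiff] at hal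
      rw [Succ_erase_bwd hwf hW hal.2, erase_left] at hsub
      refine relevant_not_forcL hrel hal.1 ?_
      intro z hz
      have hzW : z ∉ W := fun h => hal.2 (hW.rch_mem (mem_Succ.1 hz).2 h)
      exact (Finset.mem_sdiff.1 (hsub (Finset.mem_sdiff.2 ⟨hz, hzW⟩))).1
    · rw [erase_R, Finset.mem_sdiff] at har
      rw [Pred_erase_bwd hwf hW, erase_R] at hsub
      refine ⟨⟨har.1, ?_⟩, har.2⟩
      intro z hz
      rw [Finset.mem_union]
      by_cases hzW : z ∈ W
      · exact Or.inr hzW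
      · exact Or.inl (Finset.mem_sdiff.1 (hsub (Finset.mem_sdiff.2 ⟨hz, hzW⟩))).1
  · rintro ⟨⟨hal, hsub⟩, haW⟩
    right
    rw [erase_R, Pred_erase_bwd hwf hW]
    refine ⟨Finset.mem_sdiff.2 ⟨hal, haW⟩, ?_⟩
    intro z hz
    rw [Finset.mem_sdiff] at hz ⊢
    rcases Finset.mem_union.1 (hsub hz.1) with h | h
    · exact ⟨h, hz.2⟩
    · exact absurd h hz.2

/-- Left closure operator. -/
noncomputable def Cl (G : Pos α) (W : Finset α) : Finset α :=
  W ∪ G.left.filter (fun a => G.Succ a ⊆ G.left ∪ W)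

/-- Right closure operator. -/
noncomputable def ClR (G : Pos α) (W : Finset α) : Finset α :=
  W ∪ G.R.filter (fun b => G.Pred b ⊆ G.R ∪ W)

lemma mem_Cl {G : Pos α} {W : Finset α} {a : α} :
    a ∈ Cl G W ↔ a ∈ W ∨ (a ∈ G.left ∧ G.Succ a ⊆ G.left ∪ W) := by
  simp [Cl, Finset.mem_union, Finset.mem_filter]

lemma mem_ClR {G : Pos α} {W : Finset α} {b : α} :
    b ∈ ClR G W ↔ b ∈ W ∨ (b ∈ G.R ∧ G.Pred b ⊆ G.R ∪ W) := by
  simp [ClR, Finset.mem_union, Finset.mem_filter]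

lemma subset_Cl {G : Pos α} {W : Finset α} : W ⊆ Cl G W := Finset.subset_union_left
lemma subset_ClR {G : Pos α} {W : Finset α} : W ⊆ ClR G W := Finset.subset_union_left

lemma Cl_mono {G : Pos α} {W W' : Finset α} (h : W ⊆ W') : Cl G W ⊆ Cl G W' := by
  intro a ha
  rcases mem_Cl.1 ha with h' | ⟨hal, hsub⟩
  · exact subset_Cl (h h')
  · exact mem_Cl.2 (Or.inr ⟨hal, hsub.trans (Finset.union_subset_union_right h)⟩)

lemma left_union_Cl {G : Pos α} (W : Finset α) : G.left ∪ Cl G W = G.left ∪ W := by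
  ext z
  simp only [Finset.mem_union, mem_Cl]
  tauto

lemma Cl_fwd {G : Pos α} (hwf : G.WF) {W : Finset α} (hW : Fwd G W) : Fwd G (Cl G W) := by
  intro a b hab ha
  rcases mem_Cl.1 ha with h | ⟨hal, hsub⟩
  · exact subset_Cl (hW hab h)
  · have hb : b ∈ G.left ∪ W := hsub (mem_Succ.2 ⟨(hwf.1 _ hab).2, .single hab⟩)
    rcases Finset.mem_union.1 hb with hbl | hbW
    · refine mem_Cl.2 (Or.inr ⟨hbl, fun z hz => hsub ?_⟩)
      rw [mem_Succ] at hz ⊢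
      exact ⟨hz.1, Relation.ReflTransGen.head hab hz.2⟩
    · exact subset_Cl hbW

lemma ClR_bwd {G : Pos α} (hwf : G.WF) {W : Finset α} (hW : Bwd G W) : Bwd G (ClR G W) := by
  intro a b hab hb
  rcases mem_ClR.1 hb with h | ⟨hbr, hsub⟩
  · exact subset_ClR (hW hab h)
  · have ha : a ∈ G.R ∪ W := hsub (mem_Pred.2 ⟨(hwf.1 _ hab).1, .single hab⟩)
    rcases Finset.mem_union.1 ha with har | haW
    · refine mem_ClR.2 (Or.inr ⟨har, fun z hz => hsub ?_⟩)
      rw [mem_Pred] at hz ⊢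
      exact ⟨hz.1, hz.2.tail hab⟩
    · exact subset_ClR haW

lemma Cl_Cl_union (G : Pos α) (W U : Finset α) :
    Cl G (Cl G W ∪ U) = Cl G (W ∪ U) := by
  have hkey : G.left ∪ (Cl G W ∪ U) = G.left ∪ (W ∪ U) := by
    rw [← Finset.union_assoc, left_union_Cl, Finset.union_assoc]
  apply Finset.Subset.antisymm
  · intro a ha
    rcases mem_Cl.1 ha with h | ⟨hal, hsub⟩
    · rcases Finset.mem_union.1 h with h | h
      · exact Cl_mono Finset.subset_union_left h
      · exact subset_Cl (Finset.mem_union.2 (Or.inr h))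
    · exact mem_Cl.2 (Or.inr ⟨hal, fun z hz => hkey ▸ hsub hz⟩)
  · intro a ha
    rcases mem_Cl.1 ha with h | ⟨hal, hsub⟩
    · rcases Finset.mem_union.1 h with h | h
      · exact subset_Cl (Finset.mem_union.2 (Or.inl (subset_Cl h)))
      · exact subset_Cl (Finset.mem_union.2 (Or.inr h))
    · exact mem_Cl.2 (Or.inr ⟨hal, fun z hz => hkey.symm ▸ hsub hz⟩)

lemma Cl_Cl (G : Pos α) (W : Finset α) : Cl G (Cl G W) = Cl G W := by
  have := Cl_Cl_union G W ∅
  rwa [Finset.union_empty, Finset.union_empty] at this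

lemma Rmv_left {G : Pos α} (hwf : G.WF) (hrel : G.Relevant) {x : α} (hx : x ∈ G.left) :
    G.Rmv x = Cl G (G.Succ x) := by
  rw [Pos.Rmv, if_pos hx, Forc_erase_fwd hwf hrel (fwd_Succ hwf x),
    Finset.union_sdiff_self_eq_union]
  rfl

lemma Rmv_right {G : Pos α} (hwf : G.WF) (hrel : G.Relevant) {y : α} (hy : y ∈ G.R) :
    G.Rmv y = ClR G (G.Pred y) := by
  rw [Pos.Rmv, if_neg (mem_R.1 hy).2, Forc_erase_bwd hwf hrel (bwd_Pred hwf y),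
    Finset.union_sdiff_self_eq_union]
  rfl

lemma move_left {G : Pos α} (hwf : G.WF) (hrel : G.Relevant) {x : α} (hx : x ∈ G.left) :
    G.move x = G.erase (Cl G (G.Succ x)) := by
  rw [Pos.move, Rmv_left hwf hrel hx]

lemma move_right {G : Pos α} (hwf : G.WF) (hrel : G.Relevant) {y : α} (hy : y ∈ G.R) :
    G.move y = G.erase (ClR G (G.Pred y)) := by
  rw [Pos.move, Rmv_right hwf hrel hy]

lemma relevant_erase_Cl {G : Pos α} (hwf : G.WF) (hrel : G.Relevant) {W : Finset α}
    (hW : Fwd G W) : (G.erase (Cl G W)).Relevant := by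
  show _ = _
  rw [Forc_erase_fwd hwf hrel (Cl_fwd hwf hW), Finset.sdiff_eq_empty_iff_subset]
  intro a ha
  rw [Finset.mem_filter] at ha
  refine mem_Cl.2 (Or.inr ⟨ha.1, fun z hz => ?_⟩)
  have h2 := ha.2 hz
  rwa [left_union_Cl W] at h2

lemma relevant_erase_ClR {G : Pos α} (hwf : G.WF) (hrel : G.Relevant) {W : Finset α}
    (hW : Bwd G W) : (G.erase (ClR G W)).Relevant := by
  show _ = _
  rw [Forc_erase_bwd hwf hrel (ClR_bwd hwf hW), Finset.sdiff_eq_empty_iff_subset]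
  intro b hb
  rw [Finset.mem_filter] at hb
  refine mem_ClR.2 (Or.inr ⟨hb.1, fun z hz => ?_⟩)
  rcases Finset.mem_union.1 (hb.2 hz) with h | h
  · exact Finset.mem_union.2 (Or.inl h)
  · rcases mem_ClR.1 h with h' | h'
    · exact Finset.mem_union.2 (Or.inr h')
    · exact Finset.mem_union.2 (Or.inl h'.1)

lemma move_not_mem {G : Pos α} (hwf : G.WF) (hrel : G.Relevant) {x : α} (hx : x ∉ G.V) :
    G.move x = G := by
  have hxl : x ∉ G.left := fun h => hx (hwf.2 h)
  have hpred : G.Pred x = ∅ := by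
    rw [Finset.eq_empty_iff_forall_notMem]
    intro z hz
    rw [mem_Pred] at hz
    rcases hz.2.cases_tail with h | ⟨c, _, harc⟩
    · exact hx (h ▸ hz.1)
    · exact hx (hwf.1 _ harc).2
  have hF : G.Forc = ∅ := hrel
  have hR : G.Rmv x = ∅ := by
    rw [Pos.Rmv, if_neg hxl, hpred, erase_empty hwf, hF, Finset.union_empty]
  rw [Pos.move, hR, erase_empty hwf]

lemma move_left_erase_fwd {G : Pos α} {C : Finset α} (hwf : G.WF) (hC : Fwd G C)
    (hrelC : (G.erase C).Relevant) {x : α} (hx : x ∈ G.left) (hxC : x ∉ C) :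
    (G.erase C).move x = G.erase (Cl G (C ∪ G.Succ x)) := by
  have hwfC : (G.erase C).WF := WF_erase hwf C
  have hxl : x ∈ (G.erase C).left := by
    rw [erase_left, Finset.mem_sdiff]; exact ⟨hx, hxC⟩
  rw [move_left hwfC hrelC hxl, erase_erase, Succ_erase_fwd hwf hC]
  congr 1
  apply Finset.Subset.antisymm
  · intro a ha
    rcases Finset.mem_union.1 ha with haC | ha
    · exact subset_Cl (Finset.mem_union.2 (Or.inl haC))
    · rcases mem_Cl.1 ha with h | ⟨hal, hsub⟩
      · exact subset_Cl (Finset.mem_union.2 (Or.inr (Finset.mem_sdiff.1 h).1))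
      · rw [erase_left, Finset.mem_sdiff] at hal
        rw [Succ_erase_fwd hwf hC, erase_left] at hsub
        refine mem_Cl.2 (Or.inr ⟨hal.1, fun z hz => ?_⟩)
        by_cases hzC : z ∈ C
        · exact Finset.mem_union.2 (Or.inr (Finset.mem_union.2 (Or.inl hzC)))
        · rcases Finset.mem_union.1 (hsub (Finset.mem_sdiff.2 ⟨hz, hzC⟩)) with h | h
          · exact Finset.mem_union.2 (Or.inl (Finset.mem_sdiff.1 h).1)
          · exact Finset.mem_union.2
              (Or.inr (Finset.mem_union.2 (Or.inr (Finset.mem_sdiff.1 h).1)))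
  · intro a ha
    rcases mem_Cl.1 ha with h | ⟨hal, hsub⟩
    · rcases Finset.mem_union.1 h with h | h
      · exact Finset.mem_union.2 (Or.inl h)
      · by_cases haC : a ∈ C
        · exact Finset.mem_union.2 (Or.inl haC)
        · exact Finset.mem_union.2 (Or.inr (subset_Cl (Finset.mem_sdiff.2 ⟨h, haC⟩)))
    · by_cases haC : a ∈ C
      · exact Finset.mem_union.2 (Or.inl haC)
      · refine Finset.mem_union.2 (Or.inr (mem_Cl.2 (Or.inr ⟨?_, ?_⟩)))
        · rw [erase_left, Finset.mem_sdiff]; exact ⟨hal, haC⟩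
        · rw [Succ_erase_fwd hwf hC, erase_left]
          intro z hz
          rw [Finset.mem_sdiff] at hz
          rcases Finset.mem_union.1 (hsub hz.1) with h | h
          · exact Finset.mem_union.2 (Or.inl (Finset.mem_sdiff.2 ⟨h, hz.2⟩))
          · rcases Finset.mem_union.1 h with h | h
            · exact absurd h hz.2
            · exact Finset.mem_union.2 (Or.inr (Finset.mem_sdiff.2 ⟨h, hz.2⟩))

lemma move_left_erase_bwd {G : Pos α} {C : Finset α} (hwf : G.WF) (hC : Bwd G C)
    (hrelC : (G.erase C).Relevant) {x : α} (hx : x ∈ G.left) (hxC : x ∉ C) :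
    (G.erase C).move x = G.erase (C ∪ Cl G (G.Succ x)) := by
  have hwfC : (G.erase C).WF := WF_erase hwf C
  have hxl : x ∈ (G.erase C).left := by
    rw [erase_left, Finset.mem_sdiff]; exact ⟨hx, hxC⟩
  rw [move_left hwfC hrelC hxl, erase_erase, Succ_erase_bwd hwf hC hxC]
  congr 1
  apply Finset.Subset.antisymm
  · intro a ha
    rcases Finset.mem_union.1 ha with haC | ha
    · exact Finset.mem_union.2 (Or.inl haC)
    · rcases mem_Cl.1 ha with h | ⟨hal, hsub⟩
      · exact Finset.mem_union.2 (Or.inr (subset_Cl (Finset.mem_sdiff.1 h).1))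
      · rw [erase_left, Finset.mem_sdiff] at hal
        rw [Succ_erase_bwd hwf hC hal.2, erase_left] at hsub
        refine Finset.mem_union.2 (Or.inr (mem_Cl.2 (Or.inr ⟨hal.1, fun z hz => ?_⟩)))
        have hzC : z ∉ C := fun h => hal.2 (hC.rch_mem (mem_Succ.1 hz).2 h)
        rcases Finset.mem_union.1 (hsub (Finset.mem_sdiff.2 ⟨hz, hzC⟩)) with h | h
        · exact Finset.mem_union.2 (Or.inl (Finset.mem_sdiff.1 h).1)
        · exact Finset.mem_union.2 (Or.inr (Finset.mem_sdiff.1 h).1)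
  · intro a ha
    rcases Finset.mem_union.1 ha with haC | ha
    · exact Finset.mem_union.2 (Or.inl haC)
    · rcases mem_Cl.1 ha with h | ⟨hal, hsub⟩
      · by_cases haC : a ∈ C
        · exact Finset.mem_union.2 (Or.inl haC)
        · exact Finset.mem_union.2 (Or.inr (subset_Cl (Finset.mem_sdiff.2 ⟨h, haC⟩)))
      · by_cases haC : a ∈ C
        · exact Finset.mem_union.2 (Or.inl haC)
        · refine Finset.mem_union.2 (Or.inr (mem_Cl.2 (Or.inr ⟨?_, ?_⟩)))
          · rw [erase_left, Finset.mem_sdiff]; exact ⟨hal, haC⟩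
          · rw [Succ_erase_bwd hwf hC haC, erase_left]
            intro z hz
            rw [Finset.mem_sdiff] at hz
            rcases Finset.mem_union.1 (hsub hz.1) with h | h
            · exact Finset.mem_union.2 (Or.inl (Finset.mem_sdiff.2 ⟨h, hz.2⟩))
            · exact Finset.mem_union.2 (Or.inr (Finset.mem_sdiff.2 ⟨h, hz.2⟩))

end InfluenceAux

namespace Influence
end Influence

open Influence Influence.Pos Finset

open InfluenceAux

/-- commuting two moves. -/
theorem influence_commute_moves {α : Type} [DecidableEq α] (G : Pos α)
    (hwf : G.WF) (hrel : G.Relevant) (x x' y : α)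
    (hx : x ∈ G.left) (hx' : x' ∈ G.left) (hy : y ∈ G.R) :
    (x' ∈ G.Rmv x → G.Rmv x' ⊆ G.Rmv x ∧ (G.move x').move x = G.move x) ∧
    (x' ∉ G.Rmv x → x ∉ G.Rmv x' → (G.move x').move x = (G.move x).move x') ∧
    (x ∉ G.Rmv y → (G.move x).Rmv y = G.Rmv y ∧ (G.move x).move y = (G.move y).move x) := by
  have hT : Fwd G (Cl G (G.Succ x)) := Cl_fwd hwf (fwd_Succ hwf x)
  have hT' : Fwd G (Cl G (G.Succ x')) := Cl_fwd hwf (fwd_Succ hwf x')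
  have hrelT : (G.erase (Cl G (G.Succ x))).Relevant :=
    relevant_erase_Cl hwf hrel (fwd_Succ hwf x)
  have hrelT' : (G.erase (Cl G (G.Succ x'))).Relevant :=
    relevant_erase_Cl hwf hrel (fwd_Succ hwf x')
  have hxV : x ∈ G.V := hwf.2 hx
  have hx'V : x' ∈ G.V := hwf.2 hx'
  have hxS : x ∈ G.Succ x := mem_Succ.2 ⟨hxV, .refl⟩
  have hx'S : x' ∈ G.Succ x' := mem_Succ.2 ⟨hx'V, .refl⟩
  refine ⟨?_, ?_, ?_⟩
  · -- Part 1
    intro h1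
    rw [Rmv_left hwf hrel hx] at h1
    have hS' : G.Succ x' ⊆ Cl G (G.Succ x) := fun z hz => hT.rch_mem h1 (mem_Succ.1 hz).2
    have hsub : Cl G (G.Succ x') ⊆ Cl G (G.Succ x) := by
      have h := Cl_mono (G := G) hS'
      rwa [Cl_Cl] at h
    constructor
    · rw [Rmv_left hwf hrel hx, Rmv_left hwf hrel hx']
      exact hsub
    · by_cases hxT' : x ∈ Cl G (G.Succ x')
      · have hS : G.Succ x ⊆ Cl G (G.Succ x') := fun z hz => hT'.rch_mem hxT' (mem_Succ.1 hz).2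
        have hsub2 : Cl G (G.Succ x) ⊆ Cl G (G.Succ x') := by
          have h := Cl_mono (G := G) hS
          rwa [Cl_Cl] at h
        have hEq : Cl G (G.Succ x') = Cl G (G.Succ x) := Finset.Subset.antisymm hsub hsub2
        rw [move_left hwf hrel hx', move_left hwf hrel hx, hEq]
        exact move_not_mem (WF_erase hwf _) hrelT
          (fun h => (Finset.mem_sdiff.1 h).2 (subset_Cl hxS))
      · rw [move_left hwf hrel hx', move_left_erase_fwd hwf hT' hrelT' hx hxT',
          Cl_Cl_union, move_left hwf hrel hx]
        congr 1
        apply Finset.Subset.antisymm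
        · have hu : G.Succ x' ∪ G.Succ x ⊆ Cl G (G.Succ x) :=
            Finset.union_subset hS' subset_Cl
          have h2 := Cl_mono (G := G) hu
          rwa [Cl_Cl] at h2
        · exact Cl_mono Finset.subset_union_right
  · -- Part 2
    intro h1 h2
    rw [Rmv_left hwf hrel hx] at h1
    rw [Rmv_left hwf hrel hx'] at h2
    rw [move_left hwf hrel hx', move_left_erase_fwd hwf hT' hrelT' hx h2,
      move_left hwf hrel hx, move_left_erase_fwd hwf hT hrelT hx' h1,
      Cl_Cl_union, Cl_Cl_union, Finset.union_comm]
  · -- Part 3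
    intro h3
    rw [Rmv_right hwf hrel hy] at h3
    have hTy : Bwd G (ClR G (G.Pred y)) := ClR_bwd hwf (bwd_Pred hwf y)
    have hxP : x ∉ G.Pred y := fun h => h3 (subset_ClR h)
    have hyR : y ∉ G.left := (mem_R.1 hy).2
    have hyT : y ∉ Cl G (G.Succ x) := by
      intro h
      rcases mem_Cl.1 h with h | h
      · exact hxP (mem_Pred.2 ⟨hxV, (mem_Succ.1 h).2⟩)
      · exact hyR h.1
    have hPT : ∀ z ∈ G.Pred y, z ∉ Cl G (G.Succ x) := fun z hz hzT =>
      hyT (hT.rch_mem hzT (mem_Pred.1 hz).2)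
    have hwfT : (G.erase (Cl G (G.Succ x))).WF := WF_erase hwf _
    have hyRT : y ∈ (G.erase (Cl G (G.Succ x))).R := by
      rw [erase_R, Finset.mem_sdiff]; exact ⟨hy, hyT⟩
    have hPredT : (G.erase (Cl G (G.Succ x))).Pred y = G.Pred y := by
      rw [Pred_erase_fwd hwf hT hyT]
      exact Finset.sdiff_eq_self_of_disjoint (Finset.disjoint_left.2 hPT)
    have hkey : (G.erase (Cl G (G.Succ x))).Rmv y = ClR G (G.Pred y) := by
      rw [Rmv_right hwfT hrelT hyRT, hPredT]
      apply Finset.Subset.antisymm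
      · intro b hb
        rcases mem_ClR.1 hb with h | ⟨hbr, hsub⟩
        · exact subset_ClR h
        · rw [erase_R, Finset.mem_sdiff] at hbr
          rw [Pred_erase_fwd hwf hT hbr.2, erase_R] at hsub
          refine mem_ClR.2 (Or.inr ⟨hbr.1, fun z hz => ?_⟩)
          have hzT : z ∉ Cl G (G.Succ x) := fun h => hbr.2 (hT.rch_mem h (mem_Pred.1 hz).2)
          rcases Finset.mem_union.1 (hsub (Finset.mem_sdiff.2 ⟨hz, hzT⟩)) with h | h
          · exact Finset.mem_union.2 (Or.inl (Finset.mem_sdiff.1 h).1)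
          · exact Finset.mem_union.2 (Or.inr h)
      · intro b hb
        rcases mem_ClR.1 hb with h | ⟨hbr, hsub⟩
        · exact subset_ClR h
        · have hbT : b ∉ Cl G (G.Succ x) := by
            intro h
            rcases mem_Cl.1 h with h | h
            · have hxPb : x ∈ G.Pred b := mem_Pred.2 ⟨hxV, (mem_Succ.1 h).2⟩
              rcases Finset.mem_union.1 (hsub hxPb) with h' | h'
              · exact (mem_R.1 h').2 hx
              · exact hxP h'
            · exact (mem_R.1 hbr).2 h.1
          refine mem_ClR.2 (Or.inr ⟨?_, ?_⟩)
          · rw [erase_R, Finset.mem_sdiff]; exact ⟨hbr, hbT⟩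
          · rw [Pred_erase_fwd hwf hT hbT, erase_R]
            intro z hz
            rw [Finset.mem_sdiff] at hz
            rcases Finset.mem_union.1 (hsub hz.1) with h | h
            · exact Finset.mem_union.2 (Or.inl (Finset.mem_sdiff.2 ⟨h, hz.2⟩))
            · exact Finset.mem_union.2 (Or.inr h)
    constructor
    · rw [move_left hwf hrel hx, hkey, Rmv_right hwf hrel hy]
    · rw [move_left hwf hrel hx]
      calc (G.erase (Cl G (G.Succ x))).move y
          = G.erase (Cl G (G.Succ x) ∪ ClR G (G.Pred y)) := by
            rw [Pos.move, hkey, erase_erase]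
        _ = (G.move y).move x := by
            rw [move_right hwf hrel hy,
              move_left_erase_bwd hwf hTy (relevant_erase_ClR hwf hrel (bwd_Pred hwf y)) hx h3,
              Finset.union_comm]
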